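/- Let 0 < u₁ < p < u₂. For j = 1,2 set a_j = p − u_j + p·log(u_j/p), b_j = p² + u_j·p·(log(u_j/p) − 1), and x_j* = −b_j/a_j, and define B(x) = (a₁·x + b₁)/(a₂·x + b₂). Then the function x ↦ B(x)/B'(x) is concave on (x₁*, x₂*); explicitly, B(x)/B'(x) = (a₁·x + b₁)(a₂·x + b₂)/(a₁·b₂ − b₁·a₂) and its second derivative equals 2·a₁·a₂/(a₁·b₂ − b₁·a₂), which is strictly negative. -/

import Mathlib

theorem log_gt_pade {x : ℝ} (hx : 1 < x) : 2 * (x - 1) / (x + 1) < Real.log x := by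
  have key : StrictMonoOn (fun t : ℝ => Real.log t - 2 * (t - 1) / (t + 1)) (Set.Ici 1) := by
    apply strictMonoOn_of_deriv_pos (convex_Ici 1)
    · apply ContinuousOn.sub
      · exact Real.continuousOn_log.mono (fun t ht => by
          simp only [Set.mem_compl_iff, Set.mem_singleton_iff]
          intro h; rw [h] at ht; exact absurd ht (by norm_num))
      · apply ContinuousOn.div (by fun_prop) (by fun_prop)
        intro t ht; simp only [Set.mem_Ici] at ht; nlinarith
    · intro t ht
      rw [interior_Ici] at ht
      simp only [Set.mem_Ioi] at ht
      have h0 : (0:ℝ) < t := by linarith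
      have h1 : t + 1 ≠ 0 := by positivity
      have hd : HasDerivAt (fun t : ℝ => Real.log t - 2 * (t - 1) / (t + 1))
          (1/t - (2 * (t + 1) - 2 * (t - 1) * 1) / (t + 1) ^ 2) t := by
        have hn : HasDerivAt (fun t : ℝ => 2 * (t - 1)) 2 t := by
          simpa using ((hasDerivAt_id t).sub_const 1).const_mul 2
        have hdn : HasDerivAt (fun t : ℝ => t + 1) 1 t := by
          simpa using (hasDerivAt_id t).add_const 1
        exact ((Real.hasDerivAt_log (ne_of_gt h0)).sub (hn.div hdn h1)).congr_deriv (by ring)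
      rw [hd.deriv]
      rw [sub_pos, div_lt_div_iff₀ (by positivity) h0]
      nlinarith [sq_nonneg (t - 1)]
  have := key (Set.mem_Ici.2 le_rfl) (Set.mem_Ici.2 hx.le) hx
  simp only [Real.log_one] at this
  linarith

theorem quad_ineq (a₁ a₂ b₁ b₂ : ℝ) (haa : 0 < a₁ * a₂) {x y a b : ℝ}
    (ha : 0 ≤ a) (hb : 0 ≤ b) (hab : a + b = 1) :
    (a₁ * (a * x + b * y) + b₁) * (a₂ * (a * x + b * y) + b₂)
      ≤ a * ((a₁ * x + b₁) * (a₂ * x + b₂)) + b * ((a₁ * y + b₁) * (a₂ * y + b₂)) := by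
  have hb' : b = 1 - a := by linarith
  subst hb'
  nlinarith [mul_nonneg (mul_nonneg (mul_nonneg haa.le ha) hb) (sq_nonneg (x - y))]

/-- Lemma 14 (second part): x ↦ B(x)/B'(x) is concave on (x₁*, x₂*); explicitly
B/B' = (a₁x+b₁)(a₂x+b₂)/(a₁b₂−b₁a₂) and its second derivative is the constant
2a₁a₂/(a₁b₂−b₁a₂), which is strictly negative. -/
theorem B_over_B'_concave
    (p u₁ u₂ : ℝ) (h0 : 0 < u₁) (h1 : u₁ < p) (h2 : p < u₂)
    (a₁ a₂ b₁ b₂ x₁s x₂s : ℝ)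
    (ha₁ : a₁ = p - u₁ + p * Real.log (u₁ / p))
    (ha₂ : a₂ = p - u₂ + p * Real.log (u₂ / p))
    (hb₁ : b₁ = p ^ 2 + u₁ * p * (Real.log (u₁ / p) - 1))
    (hb₂ : b₂ = p ^ 2 + u₂ * p * (Real.log (u₂ / p) - 1))
    (hx₁s : x₁s = -b₁ / a₁) (hx₂s : x₂s = -b₂ / a₂)
    (B : ℝ → ℝ) (hB : ∀ x, B x = (a₁ * x + b₁) / (a₂ * x + b₂)) :
    ConcaveOn ℝ (Set.Ioo x₁s x₂s) (fun x => B x / deriv B x) ∧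
    (∀ x ∈ Set.Ioo x₁s x₂s,
      B x / deriv B x = (a₁ * x + b₁) * (a₂ * x + b₂) / (a₁ * b₂ - b₁ * a₂)) ∧
    (∀ x ∈ Set.Ioo x₁s x₂s,
      deriv (deriv (fun y => B y / deriv B y)) x = 2 * a₁ * a₂ / (a₁ * b₂ - b₁ * a₂)) ∧
    2 * a₁ * a₂ / (a₁ * b₂ - b₁ * a₂) < 0 := by
  have hp : 0 < p := lt_trans h0 h1
  have hu₂ : 0 < u₂ := lt_trans hp h2
  set L₁ := Real.log (u₁ / p) with hL₁def
  set L₂ := Real.log (u₂ / p) with hL₂def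
  -- basic log inequalities
  have hlog1 : L₁ < u₁ / p - 1 :=
    Real.log_lt_sub_one_of_pos (by positivity) (by
      intro h; rw [div_eq_one_iff_eq (ne_of_gt hp)] at h; exact absurd h (ne_of_lt h1))
  have hlog2 : L₂ < u₂ / p - 1 :=
    Real.log_lt_sub_one_of_pos (by positivity) (by
      intro h; rw [div_eq_one_iff_eq (ne_of_gt hp)] at h; exact absurd h (ne_of_gt h2))
  have hinv1 : Real.log (p / u₁) = -L₁ := by
    rw [hL₁def, ← Real.log_inv]; congr 1; rw [inv_div]
  have hinv2 : Real.log (p / u₂) = -L₂ := by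
    rw [hL₂def, ← Real.log_inv]; congr 1; rw [inv_div]
  have hlog1' : -L₁ < p / u₁ - 1 := by
    rw [← hinv1]
    exact Real.log_lt_sub_one_of_pos (by positivity) (by
      intro h; rw [div_eq_one_iff_eq (ne_of_gt h0)] at h; exact absurd h.symm (ne_of_lt h1))
  have hlog2' : -L₂ < p / u₂ - 1 := by
    rw [← hinv2]
    exact Real.log_lt_sub_one_of_pos (by positivity) (by
      intro h; rw [div_eq_one_iff_eq (ne_of_gt hu₂)] at h; exact absurd h.symm (ne_of_gt h2))
  -- signs of the coefficients
  have ha₁neg : a₁ < 0 := by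
    rw [ha₁]
    have := mul_lt_mul_of_pos_left hlog1 hp
    have hexp : p * (u₁ / p - 1) = u₁ - p := by field_simp
    linarith [hexp ▸ this]
  have ha₂neg : a₂ < 0 := by
    rw [ha₂]
    have := mul_lt_mul_of_pos_left hlog2 hp
    have hexp : p * (u₂ / p - 1) = u₂ - p := by field_simp
    linarith [hexp ▸ this]
  have hb₁pos : 0 < b₁ := by
    rw [hb₁]
    have := mul_lt_mul_of_pos_left hlog1' (by positivity : (0:ℝ) < u₁ * p)
    have hexp : u₁ * p * (p / u₁ - 1) = p ^ 2 - u₁ * p := by field_simp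
    nlinarith [hexp ▸ this]
  have hb₂pos : 0 < b₂ := by
    rw [hb₂]
    have := mul_lt_mul_of_pos_left hlog2' (by positivity : (0:ℝ) < u₂ * p)
    have hexp : u₂ * p * (p / u₂ - 1) = p ^ 2 - u₂ * p := by field_simp
    nlinarith [hexp ▸ this]
  -- Padé bounds for the key inequality
  have hL₁neg : L₁ < 0 := by
    have : u₁ / p < 1 := (div_lt_one hp).2 h1
    linarith
  have hL₂pos : 0 < L₂ := by
    have : p / u₂ < 1 := (div_lt_one hu₂).2 h2
    linarith
  have hA : 2 * (p - u₁) < (-L₁) * (p + u₁) := by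
    have hx : (1:ℝ) < p / u₁ := (one_lt_div h0).2 h1
    have := log_gt_pade hx
    rw [hinv1, div_lt_iff₀ (by positivity)] at this
    have h := mul_lt_mul_of_pos_right this h0
    calc 2 * (p - u₁) = 2 * (p / u₁ - 1) * u₁ := by field_simp
    _ < -L₁ * (p / u₁ + 1) * u₁ := h
    _ = -L₁ * (p + u₁) := by field_simp
  have hBb : 2 * (u₂ - p) < L₂ * (u₂ + p) := by
    have hx : (1:ℝ) < u₂ / p := (one_lt_div hp).2 h2
    have := log_gt_pade hx
    rw [div_lt_iff₀ (by positivity)] at this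
    have h := mul_lt_mul_of_pos_right this hp
    calc 2 * (u₂ - p) = 2 * (u₂ / p - 1) * p := by field_simp
    _ < L₂ * (u₂ / p + 1) * p := h
    _ = L₂ * (u₂ + p) := by field_simp
  -- the key sign: a₁b₂ - b₁a₂ < 0
  have hDid : a₁ * b₂ - b₁ * a₂
      = p * ((p - u₁) * (p - u₂) * (L₁ - L₂) + p * (u₂ - u₁) * (L₁ * L₂)) := by
    rw [ha₁, ha₂, hb₁, hb₂]; ring
  have hDneg : a₁ * b₂ - b₁ * a₂ < 0 := by
    rw [hDid]
    apply mul_neg_of_pos_of_neg hp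
    have k1 : ((u₂ - p) * L₂) * (2 * (p - u₁)) < ((u₂ - p) * L₂) * ((-L₁) * (p + u₁)) :=
      mul_lt_mul_of_pos_left hA (mul_pos (by linarith) hL₂pos)
    have k2 : ((p - u₁) * (-L₁)) * (2 * (u₂ - p)) < ((p - u₁) * (-L₁)) * (L₂ * (u₂ + p)) :=
      mul_lt_mul_of_pos_left hBb (mul_pos (by linarith) (by linarith))
    linarith [k1, k2]
  have hDne : a₁ * b₂ - b₁ * a₂ ≠ 0 := ne_of_lt hDneg
  have ha₂ne : a₂ ≠ 0 := ne_of_lt ha₂neg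
  have ha₁ne : a₁ ≠ 0 := ne_of_lt ha₁neg
  -- on the interval, a₂x+b₂ > 0 and a₁x+b₁ < 0
  have hdenpos : ∀ x ∈ Set.Ioo x₁s x₂s, 0 < a₂ * x + b₂ := by
    intro x hx
    have := mul_lt_mul_of_neg_left hx.2 ha₂neg
    have he : a₂ * x₂s = -b₂ := by rw [hx₂s]; field_simp
    linarith [he ▸ this]
  -- derivative of B on the interval
  have hBfun : B = fun y => (a₁ * y + b₁) / (a₂ * y + b₂) := funext hB
  have hlin₁ : ∀ x : ℝ, HasDerivAt (fun y => a₁ * y + b₁) a₁ x := fun x => by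
    simpa using ((hasDerivAt_id x).const_mul a₁).add_const b₁
  have hlin₂ : ∀ x : ℝ, HasDerivAt (fun y => a₂ * y + b₂) a₂ x := fun x => by
    simpa using ((hasDerivAt_id x).const_mul a₂).add_const b₂
  have hBder : ∀ x ∈ Set.Ioo x₁s x₂s,
      HasDerivAt B ((a₁ * b₂ - b₁ * a₂) / (a₂ * x + b₂) ^ 2) x := by
    intro x hx
    have hne := ne_of_gt (hdenpos x hx)
    have hq := (hlin₁ x).div (hlin₂ x) hne
    rw [hBfun]
    have hval : (a₁ * b₂ - b₁ * a₂) / (a₂ * x + b₂) ^ 2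
        = (a₁ * (a₂ * x + b₂) - (a₁ * x + b₁) * a₂) / (a₂ * x + b₂) ^ 2 := by ring_nf
    rw [hval]; exact hq
  have hEq : ∀ x ∈ Set.Ioo x₁s x₂s,
      B x / deriv B x = (a₁ * x + b₁) * (a₂ * x + b₂) / (a₁ * b₂ - b₁ * a₂) := by
    intro x hx
    have hne := ne_of_gt (hdenpos x hx)
    rw [(hBder x hx).deriv, hB x]
    field_simp
  -- second derivative computation
  have hQd : ∀ x : ℝ, HasDerivAt
      (fun y => (a₁ * y + b₁) * (a₂ * y + b₂) / (a₁ * b₂ - b₁ * a₂))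
      ((a₁ * (a₂ * x + b₂) + (a₁ * x + b₁) * a₂) / (a₁ * b₂ - b₁ * a₂)) x :=
    fun x => ((hlin₁ x).mul (hlin₂ x)).div_const _
  have hq'd : ∀ x : ℝ, HasDerivAt
      (fun y => (a₁ * (a₂ * y + b₂) + (a₁ * y + b₁) * a₂) / (a₁ * b₂ - b₁ * a₂))
      (2 * a₁ * a₂ / (a₁ * b₂ - b₁ * a₂)) x := by
    intro x
    have h := (((hlin₂ x).const_mul a₁).add ((hlin₁ x).mul_const a₂)).div_const
      (a₁ * b₂ - b₁ * a₂)
    have hv : 2 * a₁ * a₂ / (a₁ * b₂ - b₁ * a₂) = (a₁ * a₂ + a₁ * a₂) / (a₁ * b₂ - b₁ * a₂) := by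
      ring_nf
    rw [hv]; exact h
  have hderiv1 : ∀ x ∈ Set.Ioo x₁s x₂s,
      deriv (fun y => B y / deriv B y) x
        = (a₁ * (a₂ * x + b₂) + (a₁ * x + b₁) * a₂) / (a₁ * b₂ - b₁ * a₂) := by
    intro x hx
    have hev : (fun y => B y / deriv B y) =ᶠ[nhds x]
        (fun y => (a₁ * y + b₁) * (a₂ * y + b₂) / (a₁ * b₂ - b₁ * a₂)) :=
      Filter.eventuallyEq_of_mem (isOpen_Ioo.mem_nhds hx) hEq
    rw [hev.deriv_eq, (hQd x).deriv]
  have hderiv2 : ∀ x ∈ Set.Ioo x₁s x₂s,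
      deriv (deriv (fun y => B y / deriv B y)) x = 2 * a₁ * a₂ / (a₁ * b₂ - b₁ * a₂) := by
    intro x hx
    have hev : deriv (fun y => B y / deriv B y) =ᶠ[nhds x]
        (fun y => (a₁ * (a₂ * y + b₂) + (a₁ * y + b₁) * a₂) / (a₁ * b₂ - b₁ * a₂)) :=
      Filter.eventuallyEq_of_mem (isOpen_Ioo.mem_nhds hx) hderiv1
    rw [hev.deriv_eq, (hq'd x).deriv]
  have haa : 0 < a₁ * a₂ := mul_pos_of_neg_of_neg ha₁neg ha₂neg
  refine ⟨?_, hEq, hderiv2, div_neg_of_pos_of_neg (by linarith [haa]) hDneg⟩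
  refine ⟨convex_Ioo _ _, ?_⟩
  intro x hx y hy a b ha hb hab
  have hz : a • x + b • y ∈ Set.Ioo x₁s x₂s := (convex_Ioo x₁s x₂s) hx hy ha hb hab
  simp only [smul_eq_mul] at hz ⊢
  rw [hEq _ hz, hEq _ hx, hEq _ hy, mul_div_assoc', mul_div_assoc', ← add_div,
    div_le_div_right_of_neg hDneg]
  exact quad_ineq a₁ a₂ b₁ b₂ haa ha hb hab
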